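/- Let V be a finite-dimensional vector space over a field of characteristic zero equipped with a non-degenerate symmetric bilinear form g, and let {e_j} be a g-orthonormal basis (g(e_j,e_k) = ±δ_{jk}) with dual basis {ε^j} of V*. In the Clifford algebra Cl(V × V*), for any symmetric polynomial p in n variables, the element p(e_1ε^1, …, e_nε^n) is invariant under the diagonal action of the orthogonal group O(g). -/

import Mathlib

set_option maxHeartbeats 1000000

open CliffordAlgebra

/-- Evaluation of a multivariate polynomial at a family of (pairwise commuting) elements of a
possibly noncommutative algebra, taking products of powers in the fixed index order. -/
noncomputable def evalAt {k : Type*} [CommSemiring k] {A : Type*} [Ring A] [Algebra k A]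
    {n : ℕ} (x : Fin n → A) (p : MvPolynomial (Fin n) k) : A :=
  (AddMonoidAlgebra.coeff p).sum fun m c => c • (List.ofFn fun j => x j ^ m j).prod

section General

variable {k : Type*} [CommRing k] {n : ℕ}

lemma map_evalAt {A B : Type*} [Ring A] [Algebra k A] [Ring B] [Algebra k B]
    (f : A →ₐ[k] B) (x : Fin n → A) (p : MvPolynomial (Fin n) k) :
    f (evalAt x p) = evalAt (fun j => f (x j)) p := by
  unfold evalAt
  rw [map_finsuppSum]
  refine Finsupp.sum_congr fun m _ => ?_
  rw [map_smul]
  congr 1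
  rw [map_list_prod, List.map_ofFn]
  simp [Function.comp_def, map_pow]

lemma evalAt_comm {C : Type*} [CommRing C] [Algebra k C] (z : Fin n → C)
    (p : MvPolynomial (Fin n) k) : evalAt z p = MvPolynomial.aeval z p := by
  unfold evalAt
  rw [MvPolynomial.aeval_def, MvPolynomial.eval₂_eq']
  unfold Finsupp.sum
  refine Finset.sum_congr rfl fun m _ => ?_
  beta_reduce
  rw [Algebra.smul_def, List.prod_ofFn]
  rfl

end General

section Key

variable {k : Type*} [Field k] [CharZero k] {n : ℕ}

open MvPolynomial

lemma sum_pow_of_sq_neg_one {C : Type*} [CommRing C] [Algebra k C]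
    (z : Fin n → C) (hz : ∀ j, z j ^ 2 = -1) (m : ℕ) :
    ∑ j, z j ^ m =
      if Even m then ((-1 : C) ^ (m / 2)) * n else ((-1 : C) ^ (m / 2)) * ∑ j, z j := by
  rcases Nat.even_or_odd m with hm | hm
  · obtain ⟨t, rfl⟩ := hm
    have hev : Even (t + t) := Even.add_self t
    have hdiv : (t + t) / 2 = t := by omega
    rw [if_pos hev, hdiv]
    have hz' : ∀ j : Fin n, z j ^ (t + t) = (-1 : C) ^ t := fun j => by
      rw [← two_mul, pow_mul, hz j]
    rw [Finset.sum_congr rfl fun j _ => hz' j, Finset.sum_const, Finset.card_univ,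
      Fintype.card_fin, nsmul_eq_mul, mul_comm]
  · obtain ⟨t, rfl⟩ := hm
    have hne : ¬ Even (2 * t + 1) := by simp [Nat.even_add_one, Nat.even_mul]
    have hdiv : (2 * t + 1) / 2 = t := by omega
    rw [if_neg hne, hdiv]
    have hz' : ∀ j : Fin n, z j ^ (2 * t + 1) = (-1 : C) ^ t * z j := fun j => by
      rw [pow_succ, pow_mul, hz j]
    rw [Finset.sum_congr rfl fun j _ => hz' j, ← Finset.mul_sum]

lemma newton_eval {C : Type*} [CommRing C] [Algebra k C] (v : Fin n → C) (r : ℕ) :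
    (r : k) • MvPolynomial.aeval v (esymm (Fin n) k r)
      = (-1 : C) ^ (r + 1) * ∑ a ∈ Finset.HasAntidiagonal.antidiagonal r with a.1 < r,
        (-1 : C) ^ a.1 * MvPolynomial.aeval v (esymm (Fin n) k a.1)
          * MvPolynomial.aeval v (psum (Fin n) k a.2) := by
  have h := congrArg (MvPolynomial.aeval v) (MvPolynomial.mul_esymm_eq_sum (Fin n) k r)
  rw [Algebra.smul_def, map_natCast]
  simpa [map_mul, map_sum, map_pow] using h

lemma key {A : Type*} [Ring A] [Algebra k A]
    {C₁ C₂ : Type*} [CommRing C₁] [Algebra k C₁] [CommRing C₂] [Algebra k C₂]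
    (g₁ : C₁ →ₐ[k] A) (g₂ : C₂ →ₐ[k] A) (z : Fin n → C₁) (w : Fin n → C₂)
    (hz : ∀ j, z j ^ 2 = -1) (hw : ∀ j, w j ^ 2 = -1)
    (hsum : g₁ (∑ j, z j) = g₂ (∑ j, w j))
    (p : MvPolynomial (Fin n) k) (hp : p.IsSymmetric) :
    g₁ (MvPolynomial.aeval z p) = g₂ (MvPolynomial.aeval w p) := by
  -- power sums agree
  have hpsum : ∀ m, g₁ (MvPolynomial.aeval z (psum (Fin n) k m))
      = g₂ (MvPolynomial.aeval w (psum (Fin n) k m)) := by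
    intro m
    have h₁ : MvPolynomial.aeval z (psum (Fin n) k m) = ∑ j, z j ^ m := by
      simp [psum, map_sum]
    have h₂ : MvPolynomial.aeval w (psum (Fin n) k m) = ∑ j, w j ^ m := by
      simp [psum, map_sum]
    rw [h₁, h₂, sum_pow_of_sq_neg_one (k := k) z hz, sum_pow_of_sq_neg_one (k := k) w hw]
    split_ifs
    · simp
    · rw [map_mul, map_mul, hsum]
      simp
  -- elementary symmetric polynomials agree, by strong induction via Newton's identities
  have hesymm : ∀ r, g₁ (MvPolynomial.aeval z (esymm (Fin n) k r))
      = g₂ (MvPolynomial.aeval w (esymm (Fin n) k r)) := by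
    intro r
    induction r using Nat.strong_induction_on with
    | _ r ih =>
      rcases Nat.eq_zero_or_pos r with rfl | hr
      · simp [esymm_zero]
      · have h₁ := newton_eval (k := k) z r
        have h₂ := newton_eval (k := k) w r
        have hr' : (r : k) ≠ 0 := Nat.cast_ne_zero.mpr hr.ne'
        have hcongr : g₁ ((r : k) • MvPolynomial.aeval z (esymm (Fin n) k r))
            = g₂ ((r : k) • MvPolynomial.aeval w (esymm (Fin n) k r)) := by
          rw [h₁, h₂, map_mul, map_mul, map_sum, map_sum]
          congr 1
          · simp
          refine Finset.sum_congr rfl fun a ha => ?_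
          simp only [Finset.mem_filter, Finset.HasAntidiagonal.mem_antidiagonal] at ha
          rw [map_mul, map_mul, map_mul, map_mul, ih a.1 ha.2, hpsum a.2]
          simp
        rw [map_smul, map_smul] at hcongr
        have h3 := congrArg (fun t => (r : k)⁻¹ • t) hcongr
        simpa [smul_smul, inv_mul_cancel₀ hr'] using h3
  -- fundamental theorem of symmetric polynomials
  obtain ⟨q, hq⟩ := MvPolynomial.esymmAlgHom_fin_surjective (R := k) (n := n) le_rfl
    ⟨p, (MvPolynomial.mem_symmetricSubalgebra p).mpr hp⟩
  have hq' : p = MvPolynomial.aeval (fun i : Fin n => esymm (Fin n) k (i + 1)) q := by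
    have h4 := congrArg Subtype.val hq
    rw [MvPolynomial.esymmAlgHom_apply] at h4
    exact h4.symm
  subst hq'
  clear hq hp
  induction q using MvPolynomial.induction_on with
  | C a => simp
  | add q₁ q₂ ih₁ ih₂ =>
    rw [map_add, map_add, map_add, map_add, map_add, ih₁, ih₂]
  | mul_X q i ih =>
    simp only [map_mul, MvPolynomial.aeval_X]
    rw [ih, hesymm (i + 1)]

end Key

section Key2

variable {k : Type*} [Field k] [CharZero k] {n : ℕ}

lemma evalAt_eq_of_symm {A : Type*} [Ring A] [Algebra k A] (x y : Fin n → A)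
    (hx : ∀ i j, x i * x j = x j * x i) (hy : ∀ i j, y i * y j = y j * y i)
    (hx2 : ∀ j, x j ^ 2 = -1) (hy2 : ∀ j, y j ^ 2 = -1)
    (hsum : ∑ j, x j = ∑ j, y j)
    (p : MvPolynomial (Fin n) k) (hp : p.IsSymmetric) :
    evalAt x p = evalAt y p := by
  have hxs : ∀ a ∈ Set.range x, ∀ b ∈ Set.range x, a * b = b * a := by
    rintro _ ⟨i, rfl⟩ _ ⟨j, rfl⟩; exact hx i j
  have hys : ∀ a ∈ Set.range y, ∀ b ∈ Set.range y, a * b = b * a := by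
    rintro _ ⟨i, rfl⟩ _ ⟨j, rfl⟩; exact hy i j
  letI : CommRing (Algebra.adjoin k (Set.range x)) := Algebra.adjoinCommRingOfComm k hxs
  letI : CommRing (Algebra.adjoin k (Set.range y)) := Algebra.adjoinCommRingOfComm k hys
  have e1 : evalAt x p = (Algebra.adjoin k (Set.range x)).val (MvPolynomial.aeval
      (fun j => (⟨x j, Algebra.subset_adjoin ⟨j, rfl⟩⟩ : Algebra.adjoin k (Set.range x))) p) := by
    rw [← evalAt_comm, map_evalAt]
    rfl
  have e2 : evalAt y p = (Algebra.adjoin k (Set.range y)).val (MvPolynomial.aeval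
      (fun j => (⟨y j, Algebra.subset_adjoin ⟨j, rfl⟩⟩ : Algebra.adjoin k (Set.range y))) p) := by
    rw [← evalAt_comm, map_evalAt]
    rfl
  rw [e1, e2]
  refine key _ _ _ _ (fun j => ?_) (fun j => ?_) ?_ p hp
  · exact Subtype.ext (by simpa using hx2 j)
  · exact Subtype.ext (by simpa using hy2 j)
  · simp only [map_sum]
    exact hsum

end Key2

section Aux

variable {A : Type*} [Ring A]

lemma anticomm_mul_sq {u v : A} (h : v * u = -(u * v)) :
    (u * v) * (u * v) = -((u * u) * (v * v)) := by
  calc (u * v) * (u * v) = u * ((v * u) * v) := by simp only [mul_assoc]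
    _ = u * ((-(u * v)) * v) := by rw [h]
    _ = -((u * u) * (v * v)) := by simp only [neg_mul, mul_neg, mul_assoc]

lemma anticomm_mul_comm {u1 v1 u2 v2 : A} (h12 : v1 * u2 = -(u2 * v1))
    (h21 : v2 * u1 = -(u1 * v2)) (huu : u2 * u1 = -(u1 * u2)) (hvv : v2 * v1 = -(v1 * v2)) :
    (u1 * v1) * (u2 * v2) = (u2 * v2) * (u1 * v1) := by
  have e1 : (u1 * v1) * (u2 * v2) = -((u1 * u2) * (v1 * v2)) := by
    calc (u1 * v1) * (u2 * v2) = u1 * ((v1 * u2) * v2) := by simp only [mul_assoc]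
      _ = u1 * ((-(u2 * v1)) * v2) := by rw [h12]
      _ = -((u1 * u2) * (v1 * v2)) := by simp only [neg_mul, mul_neg, mul_assoc]
  have e2 : (u2 * v2) * (u1 * v1) = -((u2 * u1) * (v2 * v1)) := by
    calc (u2 * v2) * (u1 * v1) = u2 * ((v2 * u1) * v1) := by simp only [mul_assoc]
      _ = u2 * ((-(u1 * v2)) * v1) := by rw [h21]
      _ = -((u2 * u1) * (v2 * v1)) := by simp only [neg_mul, mul_neg, mul_assoc]
  rw [e1, e2, huu, hvv]
  simp only [neg_mul, mul_neg, neg_neg]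

end Aux

/-- Let `V` be a finite-dimensional vector space over a field of characteristic zero,
`B` a nondegenerate symmetric bilinear form with orthonormal basis `b` (`B (b i) (b j) = ±δᵢⱼ`),
`Q` the quadratic form `B ⊕ B⁻¹` on `V × V*`, and let `σ ∈ O(B)` act diagonally on `V × V*`
(via `F = σ × (σ⁻¹)ᵗ`, a quadratic isometry of `Q`).  Then for any symmetric polynomial `p`,
the element `p(e₁ε¹, …, eₙεⁿ)` of the Clifford algebra `Cl(V × V*)` is invariant under the
induced action of `σ`. -/
theorem stmt1 {k V : Type*} [Field k] [CharZero k] [AddCommGroup V] [Module k V]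
    [FiniteDimensional k V] {n : ℕ} (b : Module.Basis (Fin n) k V)
    (B : LinearMap.BilinForm k V) (hB : B.Nondegenerate) (hBsymm : B.IsSymm)
    (s : Fin n → k) (hs : ∀ i, s i = 1 ∨ s i = -1)
    (horth : ∀ i j, B (b i) (b j) = if i = j then s i else 0)
    (Q : QuadraticForm k (V × Module.Dual k V))
    (hQ : Q = QuadraticMap.prod (LinearMap.BilinMap.toQuadraticMap B)
      (LinearMap.BilinMap.toQuadraticMap
        (B.compl₁₂ ((B.toDual hB).symm : Module.Dual k V →ₗ[k] V)
          ((B.toDual hB).symm : Module.Dual k V →ₗ[k] V))))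
    (σ : V ≃ₗ[k] V) (hσ : ∀ x y, B (σ x) (σ y) = B x y)
    (F : (V × Module.Dual k V) →ₗ[k] (V × Module.Dual k V))
    (hF : F = LinearMap.prodMap (σ : V →ₗ[k] V) ((σ.symm : V →ₗ[k] V).dualMap))
    (hFQ : ∀ m, Q (F m) = Q m)
    (p : MvPolynomial (Fin n) k) (hp : p.IsSymmetric) :
    CliffordAlgebra.map ⟨F, hFQ⟩
        (evalAt (fun j => ι Q (b j, 0) * ι Q (0, b.dualBasis j)) p)
      = evalAt (fun j => ι Q (b j, 0) * ι Q (0, b.dualBasis j)) p := by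
  have hsi : ∀ i, s i * s i = 1 := fun i => by rcases hs i with h | h <;> rw [h] <;> norm_num
  -- the inverse dual map sends the dual basis to `s j • b j`
  have hdual : ∀ j, (B.toDual hB).symm (b.dualBasis j) = s j • b j := by
    intro j
    rw [LinearEquiv.symm_apply_eq]
    refine b.ext fun i => ?_
    rw [Module.Basis.dualBasis_apply_self]
    rw [map_smul, LinearMap.smul_apply, LinearMap.BilinForm.toDual_def, horth j i]
    rcases eq_or_ne j i with rfl | hij
    · simp [hsi j]
    · simp [hij, Ne.symm hij]
  -- the inverse form on dual basis vectors
  have hB' : ∀ i j, (B.compl₁₂ ((B.toDual hB).symm : Module.Dual k V →ₗ[k] V)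
      ((B.toDual hB).symm : Module.Dual k V →ₗ[k] V)) (b.dualBasis i) (b.dualBasis j)
      = if i = j then s i else 0 := by
    intro i j
    rw [LinearMap.compl₁₂_apply]
    simp only [LinearEquiv.coe_coe]
    rw [hdual i, hdual j]
    simp only [map_smul, LinearMap.smul_apply, smul_eq_mul]
    rw [horth i j]
    rcases eq_or_ne i j with rfl | hij
    · simp [← mul_assoc, hsi i]
    · simp [hij]
  -- values of Q
  have hQu : ∀ j, Q ((b j, 0) : V × Module.Dual k V) = s j := by
    intro j
    rw [hQ]
    simp only [QuadraticMap.prod_apply, LinearMap.BilinMap.toQuadraticMap_apply,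
      QuadraticMap.map_zero, add_zero, zero_add]
    rw [horth j j, if_pos rfl]
  have hQv : ∀ j, Q ((0, b.dualBasis j) : V × Module.Dual k V) = s j := by
    intro j
    rw [hQ]
    simp only [QuadraticMap.prod_apply, LinearMap.BilinMap.toQuadraticMap_apply,
      QuadraticMap.map_zero, add_zero, zero_add]
    rw [hB' j j, if_pos rfl]
  -- polar values
  have hpuv : ∀ i j, QuadraticMap.polar Q ((b i, 0) : V × Module.Dual k V) (0, b.dualBasis j)
      = 0 := by
    intro i j
    rw [hQ, QuadraticMap.polar_prod]
    simp only [QuadraticMap.polar_zero_right, QuadraticMap.polar_zero_left, add_zero, zero_add]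
  have hpuu : ∀ i j, i ≠ j →
      QuadraticMap.polar Q ((b i, 0) : V × Module.Dual k V) (b j, 0) = 0 := by
    intro i j hij
    rw [hQ, QuadraticMap.polar_prod]
    simp only [QuadraticMap.polar_zero_right, QuadraticMap.polar_zero_left, add_zero, zero_add,
      LinearMap.BilinMap.polar_toQuadraticMap]
    rw [horth i j, horth j i, if_neg hij, if_neg (Ne.symm hij), add_zero]
  have hpvv : ∀ i j, i ≠ j →
      QuadraticMap.polar Q ((0, b.dualBasis i) : V × Module.Dual k V) (0, b.dualBasis j)
      = 0 := by
    intro i j hij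
    rw [hQ, QuadraticMap.polar_prod]
    simp only [QuadraticMap.polar_zero_right, QuadraticMap.polar_zero_left, add_zero, zero_add,
      LinearMap.BilinMap.polar_toQuadraticMap]
    rw [hB' i j, hB' j i, if_neg hij, if_neg (Ne.symm hij), add_zero]
  -- anticommutation relations in the Clifford algebra
  have anti : ∀ (a c : V × Module.Dual k V), QuadraticMap.polar Q a c = 0 →
      ι Q c * ι Q a = -(ι Q a * ι Q c) := by
    intro a c h
    have h2 := CliffordAlgebra.ι_mul_ι_add_swap (Q := Q) a c
    rw [h, map_zero] at h2
    exact eq_neg_of_add_eq_zero_right h2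
  have huv : ∀ i j, ι Q ((0, b.dualBasis j) : V × Module.Dual k V) * ι Q (b i, 0)
      = -(ι Q ((b i, 0) : V × Module.Dual k V) * ι Q (0, b.dualBasis j)) :=
    fun i j => anti _ _ (hpuv i j)
  have huu : ∀ i j, i ≠ j → ι Q ((b j, 0) : V × Module.Dual k V) * ι Q (b i, 0)
      = -(ι Q ((b i, 0) : V × Module.Dual k V) * ι Q (b j, 0)) :=
    fun i j hij => anti _ _ (hpuu i j hij)
  have hvv : ∀ i j, i ≠ j →
      ι Q ((0, b.dualBasis j) : V × Module.Dual k V) * ι Q (0, b.dualBasis i)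
      = -(ι Q ((0, b.dualBasis i) : V × Module.Dual k V) * ι Q (0, b.dualBasis j)) :=
    fun i j hij => anti _ _ (hpvv i j hij)
  -- squares are -1
  have hsq : ∀ j, (ι Q ((b j, 0) : V × Module.Dual k V) * ι Q (0, b.dualBasis j)) ^ 2
      = -1 := by
    intro j
    rw [pow_two, anticomm_mul_sq (huv j j), CliffordAlgebra.ι_sq_scalar,
      CliffordAlgebra.ι_sq_scalar, hQu, hQv, ← map_mul, hsi j, map_one]
  -- pairwise commutation
  have hcomm : ∀ i j, (ι Q ((b i, 0) : V × Module.Dual k V) * ι Q (0, b.dualBasis i))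
      * (ι Q ((b j, 0) : V × Module.Dual k V) * ι Q (0, b.dualBasis j))
      = (ι Q ((b j, 0) : V × Module.Dual k V) * ι Q (0, b.dualBasis j))
      * (ι Q ((b i, 0) : V × Module.Dual k V) * ι Q (0, b.dualBasis i)) := by
    intro i j
    rcases eq_or_ne i j with rfl | hij
    · rfl
    · exact anticomm_mul_comm (huv j i) (huv i j) (huu i j hij) (hvv i j hij)
  -- expansions in the basis
  have hexp_u : ∀ w : V, (ι Q ((w, 0) : V × Module.Dual k V) : CliffordAlgebra Q)
      = ∑ i, b.repr w i • ι Q ((b i, 0) : V × Module.Dual k V) := by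
    intro w
    have h1 : ((CliffordAlgebra.ι Q).comp (LinearMap.inl k V (Module.Dual k V))) w
        = ∑ i, b.repr w i • ((CliffordAlgebra.ι Q).comp
          (LinearMap.inl k V (Module.Dual k V))) (b i) := by
      conv_lhs => rw [← b.sum_repr w]
      rw [map_sum]
      simp_rw [map_smul]
    simpa using h1
  have hexp_v : ∀ φ : Module.Dual k V, (ι Q ((0, φ) : V × Module.Dual k V) : CliffordAlgebra Q)
      = ∑ i, φ (b i) • ι Q ((0, b.dualBasis i) : V × Module.Dual k V) := by
    intro φ
    have h1 : ((CliffordAlgebra.ι Q).comp (LinearMap.inr k V (Module.Dual k V))) φ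
        = ∑ i, φ (b i) • ((CliffordAlgebra.ι Q).comp
          (LinearMap.inr k V (Module.Dual k V))) (b.dualBasis i) := by
      conv_lhs => rw [← b.dualBasis.sum_repr φ]
      rw [map_sum]
      simp_rw [map_smul, Module.Basis.dualBasis_repr]
    simpa using h1
  -- image of the generators
  have hmap : ∀ j, (CliffordAlgebra.map ⟨F, hFQ⟩)
      (ι Q ((b j, 0) : V × Module.Dual k V) * ι Q (0, b.dualBasis j))
      = (∑ i, b.repr (σ (b j)) i • ι Q ((b i, 0) : V × Module.Dual k V))
        * (∑ l, b.dualBasis j (σ.symm (b l))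
            • ι Q ((0, b.dualBasis l) : V × Module.Dual k V)) := by
    intro j
    rw [map_mul, CliffordAlgebra.map_apply_ι, CliffordAlgebra.map_apply_ι]
    have hF1 : (⟨F, hFQ⟩ : QuadraticMap.Isometry Q Q) ((b j, 0) : V × Module.Dual k V)
        = ((σ (b j), 0) : V × Module.Dual k V) := by
      show F (b j, 0) = _
      rw [hF]
      simp
    have hF2 : (⟨F, hFQ⟩ : QuadraticMap.Isometry Q Q) ((0, b.dualBasis j) : V × Module.Dual k V)
        = ((0, (σ.symm : V →ₗ[k] V).dualMap (b.dualBasis j)) : V × Module.Dual k V) := by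
      show F (0, b.dualBasis j) = _
      rw [hF]
      simp
    rw [hF1, hF2, hexp_u, hexp_v]
    simp [LinearMap.dualMap_apply]
  -- the sum of the generators is preserved
  have hsum : ∑ j, (CliffordAlgebra.map ⟨F, hFQ⟩)
      (ι Q ((b j, 0) : V × Module.Dual k V) * ι Q (0, b.dualBasis j))
      = ∑ j, ι Q ((b j, 0) : V × Module.Dual k V) * ι Q (0, b.dualBasis j) := by
    rw [Finset.sum_congr rfl fun j _ => hmap j]
    have step1 : ∀ j, (∑ i, b.repr (σ (b j)) i • ι Q ((b i, 0) : V × Module.Dual k V))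
        * (∑ l, b.dualBasis j (σ.symm (b l))
            • ι Q ((0, b.dualBasis l) : V × Module.Dual k V))
        = ∑ i, ∑ l, (b.repr (σ (b j)) i * b.dualBasis j (σ.symm (b l)))
            • (ι Q ((b i, 0) : V × Module.Dual k V)
              * ι Q ((0, b.dualBasis l) : V × Module.Dual k V)) := by
      intro j
      rw [Finset.sum_mul_sum]
      refine Finset.sum_congr rfl fun i _ => Finset.sum_congr rfl fun l _ => ?_
      rw [smul_mul_assoc, mul_smul_comm, smul_smul]
    rw [Finset.sum_congr rfl fun j _ => step1 j]
    rw [Finset.sum_comm]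
    have step2 : ∀ i, ∑ j, ∑ l, (b.repr (σ (b j)) i * b.dualBasis j (σ.symm (b l)))
        • (ι Q ((b i, 0) : V × Module.Dual k V)
          * ι Q ((0, b.dualBasis l) : V × Module.Dual k V))
        = ∑ l, (∑ j, b.repr (σ (b j)) i * b.dualBasis j (σ.symm (b l)))
          • (ι Q ((b i, 0) : V × Module.Dual k V)
            * ι Q ((0, b.dualBasis l) : V × Module.Dual k V)) := by
      intro i
      rw [Finset.sum_comm]
      exact Finset.sum_congr rfl fun l _ => (Finset.sum_smul).symm
    rw [Finset.sum_congr rfl fun i _ => step2 i]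
    have horthog : ∀ i l, (∑ j, b.repr (σ (b j)) i * b.dualBasis j (σ.symm (b l)))
        = if l = i then 1 else 0 := by
      intro i l
      have h1 : ∀ j, b.dualBasis j (σ.symm (b l)) = (b.map σ).repr (b l) j := by
        intro j
        rw [Module.Basis.dualBasis_apply, Module.Basis.map_repr]
        rfl
      have h2 : ∀ j, b.repr (σ (b j)) i = b.repr ((b.map σ) j) i := by
        intro j
        rw [Module.Basis.map_apply]
      calc (∑ j, b.repr (σ (b j)) i * b.dualBasis j (σ.symm (b l)))
          = ∑ j, b.repr ((b.map σ) j) i * (b.map σ).repr (b l) j := by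
            exact Finset.sum_congr rfl fun j _ => by rw [h1 j, h2 j]
        _ = b.repr (b l) i := Module.Basis.sum_repr_mul_repr b (b.map σ) (b l) i
        _ = if l = i then 1 else 0 := by rw [Module.Basis.repr_self, Finsupp.single_apply]
    rw [Finset.sum_congr rfl fun i _ => Finset.sum_congr rfl fun l _ => by rw [horthog i l]]
    refine Finset.sum_congr rfl fun i _ => ?_
    simp
  -- conclude
  rw [map_evalAt]
  refine evalAt_eq_of_symm _ _ (fun i j => ?_) hcomm (fun j => ?_) hsq hsum p hp
  · have h := congrArg (CliffordAlgebra.map (⟨F, hFQ⟩ : QuadraticMap.Isometry Q Q)) (hcomm i j)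
    simpa [map_mul] using h
  · have h := congrArg (CliffordAlgebra.map (⟨F, hFQ⟩ : QuadraticMap.Isometry Q Q)) (hsq j)
    simpa [map_pow] using h
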